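/- A term of the form f_1...f_n g_1...g_m(e) with f_n = ∃, f_1,...,f_{n-1} ∈ {p,s,¬,∃,I}, and g_1,...,g_m ∈ {p,s,¬}, is satisfiable if and only if either the number of negations in f_1...f_{n-1} is even, or both g_1...g_m and f_1...f_{n-1} contain an odd number of negations. -/

import Mathlib

/-- The unary operators of the algebra. -/
inductive Op : Type
  | p | s | i | neg | ex
deriving DecidableEq

/-- Permutation of `Fin n` swapping the last two coordinates (identity for `n ≤ 1`). -/
def swapLast (n : ℕ) : Equiv.Perm (Fin n) :=
  if h : 2 ≤ n then Equiv.swap ⟨n - 1, by omega⟩ ⟨n - 2, by omega⟩ else 1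

/-- Action of an operator on a relation (of some arity `n`) over `A`:
`p` moves the last coordinate to the front, `s` swaps the last two coordinates,
`neg` complements within `A^n`, `ex` projects away the last coordinate, and `i`
keeps tuples with equal last two coordinates and drops the last one; `p`, `s`,
`i` are the identity on arity `≤ 1` and `ex` the identity on arity `0`. -/
def applyOp (A : Type) : Op → (Σ n, Set (Fin n → A)) → (Σ n, Set (Fin n → A))
  | Op.p, ⟨n, R⟩ => ⟨n, {t | t ∘ (finRotate n) ∈ R}⟩
  | Op.s, ⟨n, R⟩ => ⟨n, {t | t ∘ (swapLast n) ∈ R}⟩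
  | Op.neg, ⟨n, R⟩ => ⟨n, Rᶜ⟩
  | Op.ex, ⟨0, R⟩ => ⟨0, R⟩
  | Op.ex, ⟨m + 1, R⟩ => ⟨m, {t | ∃ a : A, Fin.snoc t a ∈ R}⟩
  | Op.i, ⟨0, R⟩ => ⟨0, R⟩
  | Op.i, ⟨1, R⟩ => ⟨1, R⟩
  | Op.i, ⟨m + 2, R⟩ => ⟨m + 1, {t | Fin.snoc t (t (Fin.last m)) ∈ R}⟩

/-- Interpretation of a string of operators (head outermost) applied to a base
`k`-ary relation. -/
def interpOps (A : Type) (k : ℕ) (base : Set (Fin k → A)) :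
    List Op → Σ n, Set (Fin n → A)
  | [] => ⟨k, base⟩
  | op :: ops => applyOp A op (interpOps A k base ops)

/-- The binary identity relation `e` over `M`. -/
def eRel (M : Type) : Set (Fin 2 → M) := {t | t 0 = t 1}

section Aux
variable {A : Type}

def applyList (A : Type) (l : List Op) (S : Σ n, Set (Fin n → A)) : Σ n, Set (Fin n → A) :=
  l.foldr (applyOp A) S

lemma interpOps_eq_applyList (A : Type) (k : ℕ) (base : Set (Fin k → A)) (l : List Op) :
    interpOps A k base l = applyList A l ⟨k, base⟩ := by
  induction l with
  | nil => rfl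
  | cons op ops ih => show applyOp A op _ = applyOp A op _; rw [ih]; rfl

lemma applyList_append (l₁ l₂ : List Op) (S : Σ n, Set (Fin n → A)) :
    applyList A (l₁ ++ l₂) S = applyList A l₁ (applyList A l₂ S) :=
  List.foldr_append

lemma step_full [Nonempty A] (op : Op) (S : Σ n, Set (Fin n → A)) (h : S.2 = Set.univ) :
    (applyOp A op S).2 = if op = Op.neg then (∅ : Set _) else Set.univ := by
  obtain ⟨n, R⟩ := S
  dsimp at h; subst h
  cases op with
  | p => ext t; simp [applyOp]
  | s => ext t; simp [applyOp]
  | neg => simp [applyOp] <;> rfl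
  | ex =>
    rcases n with _ | m
    · rfl
    · ext t; simp [applyOp]
  | i =>
    rcases n with _ | _ | m
    · rfl
    · rfl
    · ext t; simp [applyOp]

lemma step_empty (op : Op) (S : Σ n, Set (Fin n → A)) (h : S.2 = ∅) :
    (applyOp A op S).2 = if op = Op.neg then (Set.univ : Set _) else ∅ := by
  obtain ⟨n, R⟩ := S
  dsimp at h; have h' : R = (∅ : Set (Fin n → A)) := h; subst h'
  cases op with
  | p => ext t; simp [applyOp] <;> exact Iff.rfl
  | s => ext t; simp [applyOp] <;> exact Iff.rfl
  | neg => simp [applyOp] <;> rfl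
  | ex =>
    rcases n with _ | m
    · rfl
    · ext t; simp [applyOp] <;> exact Iff.rfl
  | i =>
    rcases n with _ | _ | m
    · rfl
    · rfl
    · ext t; simp [applyOp] <;> exact Iff.rfl

lemma parity [Nonempty A] (l : List Op) (S : Σ n, Set (Fin n → A)) :
    (S.2 = Set.univ →
      (applyList A l S).2 = if Even (l.count Op.neg) then Set.univ else (∅ : Set _)) ∧
    (S.2 = ∅ →
      (applyList A l S).2 = if Even (l.count Op.neg) then (∅ : Set _) else Set.univ) := by
  induction l with
  | nil => simp [applyList]; exact fun h => h
  | cons op l ih =>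
    have hc : (op :: l).count Op.neg = l.count Op.neg + if op = Op.neg then 1 else 0 := by
      simp [List.count_cons]
    constructor <;> intro h
    · have hT := ih.1 h
      show (applyOp A op (applyList A l S)).2 = _
      by_cases he : Even (l.count Op.neg)
      · rw [step_full op _ (by rw [hT, if_pos he])]
        by_cases hn : op = Op.neg <;>
          simp [hn, hc, he, Nat.even_add_one] <;> rfl
      · rw [step_empty op _ (by rw [hT, if_neg he])]
        by_cases hn : op = Op.neg <;>
          simp [hn, hc, he, Nat.even_add_one] <;> rfl
    · have hT := ih.2 h
      show (applyOp A op (applyList A l S)).2 = _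
      by_cases he : Even (l.count Op.neg)
      · rw [step_empty op _ (by rw [hT, if_pos he])]
        by_cases hn : op = Op.neg <;>
          simp [hn, hc, he, Nat.even_add_one] <;> rfl
      · rw [step_full op _ (by rw [hT, if_neg he])]
        by_cases hn : op = Op.neg <;>
          simp [hn, hc, he, Nat.even_add_one] <;> rfl

end Aux
section Aux2
variable {M : Type}

lemma snoc0 (t : Fin 1 → M) (a : M) : (Fin.snoc t a : Fin 2 → M) 0 = t 0 := rfl
lemma snoc1 (t : Fin 1 → M) (a : M) : (Fin.snoc t a : Fin 2 → M) 1 = a := rfl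

lemma finRotate2_0 : finRotate 2 0 = 1 := by decide
lemma finRotate2_1 : finRotate 2 1 = 0 := by decide
lemma swapLast2_0 : swapLast 2 0 = 1 := by decide
lemma swapLast2_1 : swapLast 2 1 = 0 := by decide

lemma perm_eRel (σ : Equiv.Perm (Fin 2)) (h0 : σ 0 = 1) (h1 : σ 1 = 0) :
    {t : Fin 2 → M | t ∘ σ ∈ eRel M} = eRel M := by
  ext t
  simp only [eRel, Set.mem_setOf_eq, Function.comp_apply, h0, h1]
  exact eq_comm

lemma perm_eRelC (σ : Equiv.Perm (Fin 2)) (h0 : σ 0 = 1) (h1 : σ 1 = 0) :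
    {t : Fin 2 → M | t ∘ σ ∈ (eRel M)ᶜ} = (eRel M)ᶜ := by
  have : {t : Fin 2 → M | t ∘ σ ∈ (eRel M)ᶜ} = {t : Fin 2 → M | t ∘ σ ∈ eRel M}ᶜ := rfl
  rw [this, perm_eRel σ h0 h1]

lemma gs_lemma (gs : List Op) (hgs : ∀ g ∈ gs, g = Op.p ∨ g = Op.s ∨ g = Op.neg) :
    applyList M gs ⟨2, eRel M⟩ =
      ⟨2, if Even (gs.count Op.neg) then eRel M else (eRel M)ᶜ⟩ := by
  induction gs with
  | nil => simp [applyList]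
  | cons g gs ih =>
    have hg := hgs g (by simp)
    have ih' := ih (fun g hg => hgs g (by simp [hg]))
    show applyOp M g (applyList M gs ⟨2, eRel M⟩) = _
    rw [ih']
    have hc : (g :: gs).count Op.neg = gs.count Op.neg + if g = Op.neg then 1 else 0 := by
      simp [List.count_cons]
    rcases hg with hg | hg | hg <;> subst hg
    · show (⟨2, {t | t ∘ finRotate 2 ∈ _}⟩ : Σ n, Set (Fin n → M)) = _
      by_cases he : Even (gs.count Op.neg) <;>
        simp only [he, if_true, if_false, hc, if_neg (by decide : ¬ Op.p = Op.neg),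
          add_zero, perm_eRel _ finRotate2_0 finRotate2_1,
          perm_eRelC _ finRotate2_0 finRotate2_1]
    · show (⟨2, {t | t ∘ swapLast 2 ∈ _}⟩ : Σ n, Set (Fin n → M)) = _
      by_cases he : Even (gs.count Op.neg) <;>
        simp only [he, if_true, if_false, hc, if_neg (by decide : ¬ Op.s = Op.neg),
          add_zero, perm_eRel _ swapLast2_0 swapLast2_1,
          perm_eRelC _ swapLast2_0 swapLast2_1]
    · show (⟨2, (if Even (gs.count Op.neg) then eRel M else (eRel M)ᶜ)ᶜ⟩ : Σ n, Set (Fin n → M)) = _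
      have hcount : (Op.neg :: gs).count Op.neg = gs.count Op.neg + 1 := by
        simp [List.count_cons]
      by_cases he : Even (gs.count Op.neg) <;>
        simp [he, hcount, Nat.even_add_one, compl_compl]

lemma ex_eRel : applyOp M Op.ex ⟨2, eRel M⟩ = ⟨1, Set.univ⟩ := by
  show (⟨1, {t | ∃ a : M, Fin.snoc t a ∈ eRel M}⟩ : Σ n, Set (Fin n → M)) = _
  congr 1
  ext t
  simp only [eRel, Set.mem_setOf_eq, snoc0, snoc1, Set.mem_univ, iff_true]
  exact ⟨t 0, rfl⟩

lemma ex_eRelC : applyOp M Op.ex ⟨2, (eRel M)ᶜ⟩ = ⟨1, {t : Fin 1 → M | ∃ a, t 0 ≠ a}⟩ := by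
  show (⟨1, {t | ∃ a : M, Fin.snoc t a ∈ (eRel M)ᶜ}⟩ : Σ n, Set (Fin n → M)) = _
  congr 1

end Aux2
lemma main_eq (M : Type) (fs gs : List Op) :
    interpOps M 2 (eRel M) (fs ++ Op.ex :: gs) =
      applyList M fs (applyOp M Op.ex (applyList M gs ⟨2, eRel M⟩)) := by
  rw [interpOps_eq_applyList, applyList_append]; rfl


/-- A term `f₁…f_{n-1} ∃ g₁…g_m(e)` with `g₁,…,g_m ∈ {p,s,¬}` is satisfiable
iff either the number of negations among `f₁,…,f_{n-1}` is even, or both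
`g₁…g_m` and `f₁…f_{n-1}` contain an odd number of negations. -/
theorem sat_of_ex_term (fs gs : List Op)
    (hgs : ∀ g ∈ gs, g = Op.p ∨ g = Op.s ∨ g = Op.neg) :
    (∃ (M : Type), Nonempty M ∧
        (interpOps M 2 (eRel M) (fs ++ Op.ex :: gs)).2.Nonempty) ↔
      (Even (fs.count Op.neg) ∨
        (Odd (gs.count Op.neg) ∧ Odd (fs.count Op.neg))) := by
  constructor
  · rintro ⟨M, hM, hne⟩
    haveI := hM
    rcases Nat.even_or_odd (fs.count Op.neg) with hf | hf
    · exact Or.inl hf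
    · refine Or.inr ⟨?_, hf⟩
      by_contra hgodd
      have hge : Even (gs.count Op.neg) := Nat.not_odd_iff_even.mp hgodd
      rw [main_eq, gs_lemma gs hgs, if_pos hge, ex_eRel,
        (parity fs _).1 rfl, if_neg (Nat.not_even_iff_odd.mpr hf)] at hne
      exact Set.not_nonempty_empty hne
  · rintro (hf | ⟨hg, hf⟩)
    · refine ⟨Bool, ⟨true⟩, ?_⟩
      rw [main_eq]
      rcases Nat.even_or_odd (gs.count Op.neg) with hge | hgo
      · rw [gs_lemma gs hgs, if_pos hge, ex_eRel, (parity fs _).1 rfl, if_pos hf]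
        exact Set.univ_nonempty
      · rw [gs_lemma gs hgs, if_neg (Nat.not_even_iff_odd.mpr hgo), ex_eRelC]
        have h2 : {t : Fin 1 → Bool | ∃ a, t 0 ≠ a} = Set.univ := by
          ext t
          simp only [Set.mem_setOf_eq, Set.mem_univ, iff_true]
          exact ⟨!(t 0), by simp⟩
        rw [h2, (parity fs _).1 rfl, if_pos hf]
        exact Set.univ_nonempty
    · refine ⟨Unit, ⟨()⟩, ?_⟩
      rw [main_eq, gs_lemma gs hgs, if_neg (Nat.not_even_iff_odd.mpr hg), ex_eRelC]
      have h1 : {t : Fin 1 → Unit | ∃ a, t 0 ≠ a} = ∅ := by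
        ext t; simp
      rw [h1, (parity fs _).2 rfl, if_neg (Nat.not_even_iff_odd.mpr hf)]
      exact Set.univ_nonempty
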